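/- Let U be a nonempty finite type, let X take values in {A,B}, and let Q take values in {qA, qB, qAB}. Let p be a joint pmf of (U,X,Q) with P(U=u)>0 for every u, satisfying decodability (P(X=A, Q=qB)=0 and P(X=B, Q=qA)=0) and privacy (Q independent of U). Then for each x ∈ {A,B}, the probability of the singleton query for x satisfies P(Q = {x}) ≤ min over u of P(X=x | U=u). -/

import Mathlib

/-- The two sources. -/
inductive Src | A | B
deriving DecidableEq

instance : Fintype Src :=
  ⟨{Src.A, Src.B}, fun x => by cases x <;> simp⟩

/-- The three possible queries: only source A, only source B, or both. -/
inductive Qry | qA | qB | qAB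
deriving DecidableEq

instance : Fintype Qry :=
  ⟨{Qry.qA, Qry.qB, Qry.qAB}, fun q => by cases q <;> simp⟩

/-- The singleton query associated to a source. -/
def singletonQ : Src → Qry
  | Src.A => Qry.qA
  | Src.B => Qry.qB

lemma src_sum (f : Src → ℝ) : ∑ x, f x = f Src.A + f Src.B := by
  rw [show (Finset.univ : Finset Src) = {Src.A, Src.B} by rfl]
  simp

lemma qry_sum (f : Qry → ℝ) : ∑ q, f q = f Qry.qA + f Qry.qB + f Qry.qAB := by
  rw [show (Finset.univ : Finset Qry) = {Qry.qA, Qry.qB, Qry.qAB} by rfl]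
  simp [add_assoc]

/-- Under decodability and privacy, the probability of the singleton query for `x` is at most
`π(x) = min_u P(X=x | U=u)`. -/
theorem singleton_query_bound {U : Type} [Fintype U] [Nonempty U]
    (p : U → Src → Qry → ℝ)
    (hnn : ∀ u x q, 0 ≤ p u x q)
    (hsum : ∑ u, ∑ x, ∑ q, p u x q = 1)
    (hUpos : ∀ u, 0 < ∑ x, ∑ q, p u x q)
    (hdecA : ∑ u, p u Src.A Qry.qB = 0)
    (hdecB : ∑ u, p u Src.B Qry.qA = 0)
    (hpriv : ∀ u q, ∑ x, p u x q
      = (∑ x, ∑ q', p u x q') * (∑ u', ∑ x, p u' x q)) :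
    ∀ x : Src, (∑ u, ∑ x', p u x' (singletonQ x))
      ≤ Finset.univ.inf' Finset.univ_nonempty
          (fun u => (∑ q, p u x q) / (∑ x', ∑ q, p u x' q)) := by
  have hzA : ∀ u, p u Src.A Qry.qB = 0 := fun u =>
    (Finset.sum_eq_zero_iff_of_nonneg (fun i _ => hnn i Src.A Qry.qB)).mp hdecA u
      (Finset.mem_univ u)
  have hzB : ∀ u, p u Src.B Qry.qA = 0 := fun u =>
    (Finset.sum_eq_zero_iff_of_nonneg (fun i _ => hnn i Src.B Qry.qA)).mp hdecB u
      (Finset.mem_univ u)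
  intro x
  apply Finset.le_inf'
  intro u _
  rw [le_div_iff₀ (hUpos u)]
  have hp := hpriv u (singletonQ x)
  rw [src_sum] at hp
  have hq := qry_sum (fun q => p u x q)
  cases x with
  | A =>
    simp only [singletonQ] at hp ⊢
    rw [hzB u] at hp
    nlinarith [hnn u Src.A Qry.qB, hnn u Src.A Qry.qAB]
  | B =>
    simp only [singletonQ] at hp ⊢
    rw [hzA u] at hp
    nlinarith [hnn u Src.B Qry.qA, hnn u Src.B Qry.qAB]
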